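/- Let q be a prime power and k ≥ 3 an integer. The number of elements B in the multiplicative group of F_{q^k} such that the polynomial X^{q+1} - B·X + B splits completely into linear factors over F_{q^k} equals (q^{k-1} - 1)/(q^2 - 1) if k is odd, and (q^{k-1} - q)/(q^2 - 1) if k is even. -/

import Mathlib

open Polynomial Finset
set_option linter.unusedSectionVars false
set_option linter.unusedVariables false
set_option maxHeartbeats 1000000

section BluherAux

variable {F : Type*} [Field F] [Fintype F] [DecidableEq F]

/-- The set of roots of the Bluher polynomial, as a finset. -/
private def bRoots (q : ℕ) (B : F) : Finset F :=
  {x ∈ univ | x ^ (q+1) - B * x + B = 0}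

private lemma mem_bRoots {q : ℕ} {B x : F} :
    x ∈ bRoots q B ↔ x ^ (q+1) - B * x + B = 0 := by
  simp [bRoots]

private lemma root_ne_zero {q : ℕ} {B x : F} (hB : B ≠ 0) (hx : x ∈ bRoots q B) : x ≠ 0 := by
  rintro rfl
  rw [mem_bRoots, zero_pow (by omega), mul_zero] at hx
  simp at hx; exact hB hx

private lemma root_ne_one {q : ℕ} {B x : F} (hx : x ∈ bRoots q B) : x ≠ 1 := by
  rintro rfl
  rw [mem_bRoots, one_pow, mul_one] at hx
  simp at hx

private lemma root_eq {q : ℕ} {B x : F} (hx : x ∈ bRoots q B) :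
    x ^ q * x = B * (x - 1) := by
  rw [mem_bRoots] at hx
  rw [← pow_succ]
  linear_combination hx

private lemma root_eq' {q : ℕ} {B x : F} (hx : x ∈ bRoots q B) :
    x ^ (q+1) = B * (x - 1) := by
  rw [pow_succ]; exact root_eq hx

private lemma frob_inj {q : ℕ} (hq : 2 ≤ q) (hfrob : ∀ x y : F, (x - y)^q = x^q - y^q)
    {x y : F} (h : x ^ q = y ^ q) : x = y := by
  have h2 := hfrob x y
  rw [h, sub_self] at h2
  exact sub_eq_zero.mp (pow_eq_zero_iff (n := q) (by omega) |>.mp h2)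

/-! ### Polynomial facts -/

private lemma lowDeg (B : F) (q : ℕ) (hq : 2 ≤ q) :
    ((- (C B * X) + C B : F[X])).natDegree < (X ^ (q+1) : F[X]).natDegree := by
  have h2 : ((- (C B * X) + C B : F[X])).natDegree ≤ 1 := by
    refine le_trans (natDegree_add_le _ _) ?_
    simp only [natDegree_neg, natDegree_C, max_le_iff]
    exact ⟨le_trans (natDegree_C_mul_le _ _) (by simp), by simp⟩
  simpa [natDegree_X_pow] using lt_of_le_of_lt h2 (by omega : 1 < q + 1)

private lemma bluher_eq (B : F) (q : ℕ) :
    (X ^ (q + 1) - C B * X + C B : F[X]) = X ^ (q+1) + (-(C B * X) + C B) := by ring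

private lemma bluher_natDegree {q : ℕ} (hq : 2 ≤ q) (B : F) :
    (X ^ (q + 1) - C B * X + C B : F[X]).natDegree = q + 1 := by
  rw [bluher_eq, natDegree_add_eq_left_of_natDegree_lt (lowDeg B q hq), natDegree_X_pow]

private lemma bluher_monic {q : ℕ} (hq : 2 ≤ q) (B : F) :
    (X ^ (q + 1) - C B * X + C B : F[X]).Monic := by
  rw [bluher_eq]
  refine (monic_X_pow _).add_of_left ?_
  rcases eq_or_ne (-(C B * X) + C B : F[X]) 0 with h | h
  · rw [h, degree_zero, degree_X_pow]
    exact_mod_cast WithBot.bot_lt_coe (q+1)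
  · rw [degree_eq_natDegree h, degree_eq_natDegree (pow_ne_zero _ (X_ne_zero (R := F)))]
    exact_mod_cast lowDeg B q hq

private lemma bluher_ne_zero {q : ℕ} (hq : 2 ≤ q) (B : F) :
    (X ^ (q + 1) - C B * X + C B : F[X]) ≠ 0 := (bluher_monic hq B).ne_zero

private lemma bluher_sep {q : ℕ} (hq : 2 ≤ q) (hq0 : (q : F) = 0) {B : F} (hB : B ≠ 0) :
    (X ^ (q + 1) - C B * X + C B : F[X]).Separable := by
  have hder : derivative (X ^ (q + 1) - C B * X + C B : F[X]) = X ^ q - C B := by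
    simp [derivative_X_pow, hq0]
  rw [Polynomial.Separable, hder]
  refine ⟨C B⁻¹, -(C B⁻¹) * X, ?_⟩
  have : C B⁻¹ * (X ^ (q + 1) - C B * X + C B) + -C B⁻¹ * X * (X ^ q - C B)
      = C B⁻¹ * C B := by ring
  rw [this, ← C_mul, inv_mul_cancel₀ hB, C_1]

private lemma roots_toFinset {q : ℕ} (hq : 2 ≤ q) (B : F) :
    (X ^ (q + 1) - C B * X + C B : F[X]).roots.toFinset = bRoots q B := by
  ext x
  simp only [Multiset.mem_toFinset, mem_roots (bluher_ne_zero hq B), IsRoot.def, mem_bRoots]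
  simp

private lemma card_bRoots_le {q : ℕ} (hq : 2 ≤ q) (B : F) :
    (bRoots q B).card ≤ q + 1 := by
  rw [← roots_toFinset hq B]
  exact le_trans (Multiset.toFinset_card_le _)
    (le_trans (card_roots' _) (le_of_eq (bluher_natDegree hq B)))

private lemma splits_iff_bRoots {q : ℕ} (hq : 2 ≤ q) (hq0 : (q : F) = 0) {B : F} (hB : B ≠ 0) :
    ((X ^ (q + 1) - C B * X + C B : F[X]).map (RingHom.id F)).Splits ↔
      (bRoots q B).card = q + 1 := by
  rw [Polynomial.map_id, splits_iff_card_roots, bluher_natDegree hq B, ← roots_toFinset hq B,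
    Multiset.toFinset_card_of_nodup (nodup_roots (bluher_sep hq hq0 hB))]

/-! ### Counting roots of unity -/

private lemma count_pow_le (e : ℕ) (he : 0 < e) (s : F) :
    ({t ∈ (univ : Finset F) | t ^ e = s}).card ≤ e := by
  have hne : (X ^ e - C s : F[X]) ≠ 0 := X_pow_sub_C_ne_zero he s
  have hsub : {t ∈ (univ : Finset F) | t ^ e = s} ⊆ (X ^ e - C s : F[X]).roots.toFinset := by
    intro t ht
    simp only [mem_filter] at ht
    rw [Multiset.mem_toFinset, mem_roots hne]
    simp [ht.2]
  calc ({t ∈ (univ : Finset F) | t ^ e = s}).card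
      ≤ (X ^ e - C s : F[X]).roots.toFinset.card := card_le_card hsub
    _ ≤ Multiset.card (X ^ e - C s : F[X]).roots := Multiset.toFinset_card_le _
    _ ≤ (X ^ e - C s : F[X]).natDegree := card_roots' _
    _ = e := natDegree_X_pow_sub_C

private lemma card_nonzero : (univ.filter fun t : F => t ≠ 0).card = Fintype.card F - 1 := by
  rw [filter_ne', card_erase_of_mem (mem_univ 0), card_univ]

private lemma pow_image_eq (d e : ℕ) (hd : 0 < d) (he : 0 < e)
    (hde : d * e = Fintype.card F - 1) :
    (univ.filter fun t : F => t ≠ 0).image (fun t => t ^ e)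
      = {s ∈ (univ : Finset F) | s ^ d = 1} := by
  have hsub : (univ.filter fun t : F => t ≠ 0).image (fun t => t ^ e)
      ⊆ {s ∈ (univ : Finset F) | s ^ d = 1} := by
    intro s hs
    simp only [mem_image, mem_filter, mem_univ, true_and] at hs ⊢
    obtain ⟨t, ht0, rfl⟩ := hs
    rw [← pow_mul, mul_comm e d, hde]
    exact FiniteField.pow_card_sub_one_eq_one t ht0
  have hIm : d ≤ ((univ.filter fun t : F => t ≠ 0).image (fun t => t ^ e)).card := by
    have h1 : (univ.filter fun t : F => t ≠ 0).card
        ≤ e * ((univ.filter fun t : F => t ≠ 0).image (fun t => t ^ e)).card := by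
      refine Finset.card_le_mul_card_image _ e (fun s _ => ?_)
      refine le_trans (card_le_card ?_) (count_pow_le e he s)
      intro t ht
      simp only [mem_filter, mem_univ, true_and] at ht ⊢
      exact ht.2
    rw [card_nonzero, ← hde] at h1
    exact Nat.le_of_mul_le_mul_right (by linarith [h1]) he
  apply Finset.eq_of_subset_of_card_le hsub
  exact le_trans (count_pow_le d hd 1) hIm

private lemma count_nth_roots (d e : ℕ) (hd : 0 < d) (he : 0 < e)
    (hde : d * e = Fintype.card F - 1) :
    ({s ∈ (univ : Finset F) | s ^ d = 1}).card = d := by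
  refine le_antisymm (count_pow_le d hd 1) ?_
  rw [← pow_image_eq d e hd he hde]
  have h1 : (univ.filter fun t : F => t ≠ 0).card
      ≤ e * ((univ.filter fun t : F => t ≠ 0).image (fun t => t ^ e)).card := by
    refine Finset.card_le_mul_card_image _ e (fun s _ => ?_)
    refine le_trans (card_le_card ?_) (count_pow_le e he s)
    intro t ht
    simp only [mem_filter, mem_univ, true_and] at ht ⊢
    exact ht.2
  rw [card_nonzero, ← hde] at h1
  exact Nat.le_of_mul_le_mul_right (by linarith [h1]) he

private lemma pow_image_iff (d e : ℕ) (hd : 0 < d) (he : 0 < e)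
    (hde : d * e = Fintype.card F - 1) (s : F) :
    (∃ t : F, t ≠ 0 ∧ s = t ^ e) ↔ s ^ d = 1 := by
  constructor
  · rintro ⟨t, ht0, rfl⟩
    rw [← pow_mul, mul_comm e d, hde]
    exact FiniteField.pow_card_sub_one_eq_one t ht0
  · intro hs
    have : s ∈ {s ∈ (univ : Finset F) | s ^ d = 1} := by simp [hs]
    rw [← pow_image_eq d e hd he hde] at this
    simp only [mem_image, mem_filter, mem_univ, true_and] at this
    obtain ⟨t, ht0, rfl⟩ := this
    exact ⟨t, ht0, rfl⟩

/-! ### The two key root-structure lemmas -/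

private lemma ratio_pow {q : ℕ} (hq : 2 ≤ q) (hfrob : ∀ x y : F, (x - y)^q = x^q - y^q)
    {B a b x : F} (hB : B ≠ 0) (ha : a ∈ bRoots q B) (hb : b ∈ bRoots q B)
    (hx : x ∈ bRoots q B) (hxa : x ≠ a) (hxb : x ≠ b) :
    ∃ t : F, t ≠ 0 ∧ b = a * t ^ (q - 1) := by
  have hx0 := root_ne_zero hB hx
  refine ⟨(x - a) / (x - b), div_ne_zero (sub_ne_zero.mpr hxa) (sub_ne_zero.mpr hxb), ?_⟩
  set t := (x - a) / (x - b) with ht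
  have ht0 : t ≠ 0 := div_ne_zero (sub_ne_zero.mpr hxa) (sub_ne_zero.mpr hxb)
  have h1 : x - b ≠ 0 := sub_ne_zero.mpr hxb
  have h2 : x ^ q - b ^ q ≠ 0 :=
    sub_ne_zero.mpr (fun hc => hxb (frob_inj hq hfrob hc))
  have key : a * t ^ q = b * t := by
    have htq : t ^ q = (x ^ q - a ^ q) / (x ^ q - b ^ q) := by
      rw [ht, div_pow, hfrob, hfrob]
    rw [htq, ht, ← mul_div_assoc, ← mul_div_assoc, div_eq_div_iff h2 h1]
    linear_combination (a - b) * root_eq hx - (x - b) * root_eq ha + (x - a) * root_eq hb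
  have h3 : a * t ^ (q - 1) * t = b * t := by
    rw [mul_assoc, ← pow_succ]
    have h4 : q - 1 + 1 = q := by omega
    rw [h4, key]
  exact (mul_right_cancel₀ ht0 h3).symm

private lemma split_ratio {q : ℕ} (hq : 2 ≤ q) (hfrob : ∀ x y : F, (x - y)^q = x^q - y^q)
    {B a b : F} (hB : B ≠ 0) (hcB : (bRoots q B).card = q + 1)
    (ha : a ∈ bRoots q B) (hb : b ∈ bRoots q B) (hab : a ≠ b) :
    ∃ t : F, t ≠ 0 ∧ b = a * t ^ (q - 1) := by
  have hns : ¬ (bRoots q B ⊆ ({a, b} : Finset F)) := by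
    intro hsub
    have h1 := card_le_card hsub
    have h2 : ({a, b} : Finset F).card ≤ 2 := card_insert_le _ _ |>.trans (by simp)
    omega
  obtain ⟨x, hx, hxab⟩ := Finset.not_subset.mp hns
  simp only [mem_insert, mem_singleton, not_or] at hxab
  exact ratio_pow hq hfrob hB ha hb hx hxab.1 hxab.2

private lemma root_of_u {q : ℕ} (hq : 2 ≤ q) (hfrob : ∀ x y : F, (x - y)^q = x^q - y^q)
    {B a b u : F} (hB : B ≠ 0) (ha : a ∈ bRoots q B) (hb : b ∈ bRoots q B)
    (hu1 : u ≠ 1) (huq : u ^ q * a = b * u) :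
    (a - b * u) / (1 - u) ∈ bRoots q B := by
  have ha0 := root_ne_zero hB ha
  have hb0 := root_ne_zero hB hb
  have hD : (1 : F) - u ≠ 0 := sub_ne_zero.mpr (Ne.symm hu1)
  have hDqe : ((1 : F) - u) ^ q = 1 - u ^ q := by rw [hfrob]; simp
  have hDq : (1 : F) - u ^ q ≠ 0 := by rw [← hDqe]; exact pow_ne_zero _ hD
  have hXq : (a - b * u) ^ q = a ^ q - b ^ q * u ^ q := by rw [hfrob, mul_pow]
  have Pab : ((a ^ q - b ^ q * u ^ q) * (a - b * u) - B * (a - b * u) * (1 - u ^ q)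
      + B * (1 - u ^ q) * (1 - u)) * (a * b) = 0 := by
    linear_combination (b * (a - b * u)) * (root_eq ha)
      - (u ^ q * a * (a - b * u)) * (root_eq hb)
      + (B * b * (a - b * u) - B * (b - 1) * (a - b * u) - B * b * (1 - u)) * huq
  have P : (a ^ q - b ^ q * u ^ q) * (a - b * u) - B * (a - b * u) * (1 - u ^ q)
      + B * (1 - u ^ q) * (1 - u) = 0 := by
    rcases mul_eq_zero.mp Pab with h | h
    · exact h
    · exact absurd h (mul_ne_zero ha0 hb0)
  rw [mem_bRoots]
  have hpow : ((a - b * u) / (1 - u)) ^ (q + 1)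
      = ((a ^ q - b ^ q * u ^ q) * (a - b * u)) / ((1 - u ^ q) * (1 - u)) := by
    rw [div_pow, pow_succ, pow_succ, hXq, hDqe]
  have step : ((a ^ q - b ^ q * u ^ q) * (a - b * u)) / ((1 - u ^ q) * (1 - u))
      - B * ((a - b * u) / (1 - u)) + B
      = ((a ^ q - b ^ q * u ^ q) * (a - b * u) - B * (a - b * u) * (1 - u ^ q)
      + B * (1 - u ^ q) * (1 - u)) / ((1 - u ^ q) * (1 - u)) := by
    field_simp
  rw [hpow, step, P, zero_div]

private lemma card_eq_of_pair {q : ℕ} (hq : 2 ≤ q)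
    (hfrob : ∀ x y : F, (x - y)^q = x^q - y^q)
    {e : ℕ} (he : 0 < e) (hqe : (q - 1) * e = Fintype.card F - 1)
    {B a b t : F} (hB : B ≠ 0) (ha : a ∈ bRoots q B) (hb : b ∈ bRoots q B)
    (hab : a ≠ b) (ht : t ≠ 0) (hbat : b = a * t ^ (q - 1)) :
    (bRoots q B).card = q + 1 := by
  have ha0 := root_ne_zero hB ha
  have hb0 := root_ne_zero hB hb
  have hμcard : ({z ∈ (univ : Finset F) | z ^ (q-1) = 1}).card = q - 1 :=
    count_nth_roots (q-1) e (by omega) he hqe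
  set μ : Finset F := {z ∈ (univ : Finset F) | z ^ (q-1) = 1} with hμ
  set V : Finset F := insert (0 : F) (μ.image (fun z => t * z)) with hV
  have hV0 : (0:F) ∉ μ.image (fun z => t * z) := by
    simp only [mem_image, hμ, mem_filter, mem_univ, true_and]
    rintro ⟨z, hz1, hz2⟩
    rcases mul_eq_zero.mp hz2 with h | h
    · exact ht h
    · rw [h, zero_pow (by omega : q - 1 ≠ 0)] at hz1; exact zero_ne_one hz1
  have hVcard : V.card = q := by
    rw [hV, card_insert_of_notMem hV0,
      card_image_of_injective _ (mul_right_injective₀ ht), hμcard]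
    omega
  have hVprop : ∀ u ∈ V, u ≠ 1 ∧ u ^ q * a = b * u := by
    intro u hu
    rw [hV, mem_insert] at hu
    rcases hu with rfl | hu
    · refine ⟨(by norm_num : (0:F) ≠ 1), ?_⟩
      rw [zero_pow (by omega : q ≠ 0), zero_mul, mul_zero]
    · obtain ⟨z, hz, rfl⟩ := mem_image.mp hu
      have hz1 : z ^ (q-1) = 1 := (mem_filter.mp hz).2
      have hz0 : z ≠ 0 := by
        rintro rfl; rw [zero_pow (by omega : q - 1 ≠ 0)] at hz1; exact zero_ne_one hz1
      constructor
      · intro h1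
        apply hab
        have h2 : (t*z)^(q-1) = 1 := by rw [h1]; exact one_pow _
        rw [mul_pow, hz1, mul_one] at h2
        rw [hbat, h2, mul_one]
      · have hpw : (t*z)^q = (t*z)^(q-1) * (t*z) := by
          rw [← pow_succ]; congr 1; omega
        rw [hpw, mul_pow, hz1, mul_one, hbat]
        ring
  set ψ : F → F := fun u => (a - b*u)/(1-u) with hψ
  have hWsub : insert b (V.image ψ) ⊆ bRoots q B := by
    intro x hx
    rw [mem_insert] at hx
    rcases hx with rfl | hx
    · exact hb
    · obtain ⟨u, hu, rfl⟩ := mem_image.mp hx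
      obtain ⟨hu1, huq⟩ := hVprop u hu
      exact root_of_u hq hfrob hB ha hb hu1 huq
  have hbV : b ∉ V.image ψ := by
    intro hmem
    obtain ⟨u, hu, he2⟩ := mem_image.mp hmem
    obtain ⟨hu1, _⟩ := hVprop u hu
    have hD : (1:F) - u ≠ 0 := sub_ne_zero.mpr (Ne.symm hu1)
    rw [hψ] at he2
    have h5 := (div_eq_iff hD).mp he2
    exact hab (by linear_combination h5)
  have hinj : Set.InjOn ψ ↑V := by
    intro u hu v hv he2
    have hu1 := (hVprop u (by exact_mod_cast hu)).1
    have hv1 := (hVprop v (by exact_mod_cast hv)).1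
    have hDu : (1:F) - u ≠ 0 := sub_ne_zero.mpr (Ne.symm hu1)
    have hDv : (1:F) - v ≠ 0 := sub_ne_zero.mpr (Ne.symm hv1)
    rw [hψ] at he2
    simp only at he2
    rw [div_eq_div_iff hDu hDv] at he2
    have h3 : (a - b) * (u - v) = 0 := by linear_combination he2
    rcases mul_eq_zero.mp h3 with h | h
    · exact absurd (sub_eq_zero.mp h) hab
    · exact sub_eq_zero.mp h
  have hWcard : (insert b (V.image ψ)).card = q + 1 := by
    rw [card_insert_of_notMem hbV, Finset.card_image_of_injOn hinj, hVcard]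
  refine le_antisymm (card_bRoots_le hq B) ?_
  calc q + 1 = (insert b (V.image ψ)).card := hWcard.symm
    _ ≤ (bRoots q B).card := card_le_card hWsub

private noncomputable def PP (q : ℕ) : Finset (F × F) :=
  @Finset.filter _ (fun ab : F × F =>
    ab.1 ≠ 0 ∧ ab.1 ≠ 1 ∧ ab.2 ≠ 0 ∧ ab.2 ≠ 1 ∧ ab.1 ≠ ab.2 ∧
    ab.1 ^ (q+1) * (ab.2 - 1) = ab.2 ^ (q+1) * (ab.1 - 1) ∧
    ∃ t : F, t ≠ 0 ∧ ab.2 = ab.1 * t ^ (q - 1)) (Classical.decPred _) univ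

private lemma mem_PP {q : ℕ} {a b : F} :
    (a, b) ∈ (PP q : Finset (F × F)) ↔
    a ≠ 0 ∧ a ≠ 1 ∧ b ≠ 0 ∧ b ≠ 1 ∧ a ≠ b ∧
    a ^ (q+1) * (b - 1) = b ^ (q+1) * (a - 1) ∧
    ∃ t : F, t ≠ 0 ∧ b = a * t ^ (q - 1) := by
  rw [PP, @Finset.mem_filter _ _ (Classical.decPred _)]
  simp only [mem_univ, true_and]

private def splitSet (q : ℕ) : Finset F :=
  {B ∈ (univ : Finset F) | B ≠ 0 ∧ (bRoots q B).card = q + 1}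

private lemma mem_splitSet {q : ℕ} {B : F} :
    B ∈ (splitSet q : Finset F) ↔ B ≠ 0 ∧ (bRoots q B).card = q + 1 := by simp [splitSet]

private lemma PP_eq_biUnion {q : ℕ} (hq : 2 ≤ q)
    (hfrob : ∀ x y : F, (x - y)^q = x^q - y^q)
    {e : ℕ} (he : 0 < e) (hqe : (q - 1) * e = Fintype.card F - 1) :
    (PP q : Finset (F × F)) = (splitSet q).biUnion (fun B => (bRoots q B).offDiag) := by
  ext ab
  obtain ⟨a, b⟩ := ab
  rw [mem_PP, mem_biUnion]
  constructor
  · rintro ⟨ha0, ha1, hb0, hb1, hab, hΦ, t, ht0, hbt⟩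
    have ha1' : a - 1 ≠ 0 := sub_ne_zero.mpr ha1
    set B : F := a^(q+1) * (a-1)⁻¹ with hBdef
    have hBa : B * (a - 1) = a^(q+1) := by
      rw [hBdef, mul_assoc, inv_mul_cancel₀ ha1', mul_one]
    have hB0 : B ≠ 0 := mul_ne_zero (pow_ne_zero _ ha0) (inv_ne_zero ha1')
    have haR : a ∈ bRoots q B := by
      rw [mem_bRoots]; linear_combination (-1 : F) * hBa
    have hbR : b ∈ bRoots q B := by
      rw [mem_bRoots]
      have h10 : (b^(q+1) - B*b + B) * (a-1) = 0 := by
        linear_combination (-1 : F) * hΦ - (b-1) * hBa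
      rcases mul_eq_zero.mp h10 with h | h
      · exact h
      · exact absurd h ha1'
    refine ⟨B, ?_, ?_⟩
    · rw [mem_splitSet]
      exact ⟨hB0, card_eq_of_pair hq hfrob he hqe hB0 haR hbR hab ht0 hbt⟩
    · rw [mem_offDiag]
      exact ⟨haR, hbR, hab⟩
  · rintro ⟨B, hBmem, hmem⟩
    rw [mem_splitSet] at hBmem
    obtain ⟨hB0, hcB⟩ := hBmem
    rw [mem_offDiag] at hmem
    obtain ⟨haR, hbR, hab⟩ := hmem
    refine ⟨root_ne_zero hB0 haR, root_ne_one haR, root_ne_zero hB0 hbR, root_ne_one hbR,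
      hab, ?_, split_ratio hq hfrob hB0 hcB haR hbR hab⟩
    linear_combination (b - 1) * root_eq' haR - (a - 1) * root_eq' hbR

private lemma PP_card {q : ℕ} (hq : 2 ≤ q)
    (hfrob : ∀ x y : F, (x - y)^q = x^q - y^q)
    {e : ℕ} (he : 0 < e) (hqe : (q - 1) * e = Fintype.card F - 1) :
    (PP q : Finset (F × F)).card = (splitSet q : Finset F).card * ((q+1) * q) := by
  rw [PP_eq_biUnion hq hfrob he hqe, card_biUnion]
  · rw [Finset.sum_congr rfl (g := fun _ => (q+1)*q) (fun B hB => ?_), sum_const, smul_eq_mul]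
    rw [mem_splitSet] at hB
    rw [offDiag_card, hB.2]
    exact Nat.sub_eq_of_eq_add (by ring)
  · intro B hB B' hB' hne
    show Disjoint (bRoots q B).offDiag (bRoots q B').offDiag
    rw [Finset.disjoint_left]
    rintro ⟨x, y⟩ hxy hxy'
    rw [mem_offDiag] at hxy hxy'
    apply hne
    have h1 := root_eq' hxy.1
    have h2 := root_eq' hxy'.1
    rw [Finset.mem_coe, mem_splitSet] at hB hB'
    have hx1 : x - 1 ≠ 0 := sub_ne_zero.mpr (root_ne_one hxy.1)
    have h3 : B * (x - 1) = B' * (x - 1) := by rw [← h1, ← h2]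
    exact mul_right_cancel₀ hx1 h3

private def SS (q n' : ℕ) : Finset F :=
  {s ∈ (univ : Finset F) | s ^ n' = 1 ∧ ¬ s ^ (q+1) = 1}

private lemma mem_SS {q n' : ℕ} {s : F} :
    s ∈ (SS q n' : Finset F) ↔ s ^ n' = 1 ∧ ¬ s ^ (q+1) = 1 := by
  simp [SS]

private lemma PP_card_eq_SS {q : ℕ} (hq : 2 ≤ q)
    (hfrob : ∀ x y : F, (x - y)^q = x^q - y^q)
    {n' : ℕ} (hn'0 : 0 < n') (hn : n' * (q - 1) = Fintype.card F - 1) :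
    (PP q : Finset (F × F)).card = (SS q n' : Finset F).card := by
  have hq10 : 0 < q - 1 := by omega
  refine Finset.card_bij' (fun ab _ => ab.2 * ab.1⁻¹)
    (fun s _ => ((1 - s^(q+1)) / (s * (1 - s^q)), s * ((1 - s^(q+1)) / (s * (1 - s^q)))))
    ?_ ?_ ?_ ?_
  · -- maps PP into SS
    rintro ⟨a, b⟩ hab'
    rw [mem_PP] at hab'
    obtain ⟨ha0, ha1, hb0, hb1, hab, hΦ, t, ht0, hbt⟩ := hab'
    rw [mem_SS]
    have hs : b * a⁻¹ = t ^ (q-1) := by rw [hbt]; field_simp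
    refine ⟨(pow_image_iff n' (q-1) hn'0 hq10 hn _).mp ⟨t, ht0, hs⟩, ?_⟩
    intro hc
    apply hab
    have hba : b = a * (b * a⁻¹) := by field_simp
    have hbq : b ^ (q+1) = a^(q+1) := by rw [hba, mul_pow, hc, mul_one]
    rw [hbq] at hΦ
    have h5 := mul_left_cancel₀ (pow_ne_zero (q+1) ha0) hΦ
    exact (by linear_combination -h5 : a = b)
  · -- maps SS into PP
    intro s hs
    rw [mem_SS] at hs
    obtain ⟨hsn, hsq1⟩ := hs
    have hs0 : s ≠ 0 := by
      rintro rfl; rw [zero_pow (by omega : n' ≠ 0)] at hsn; exact zero_ne_one hsn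
    have hs1 : s ≠ 1 := by rintro rfl; exact hsq1 (one_pow _)
    have hsq : s ^ q ≠ 1 := fun hc => hs1 (frob_inj hq hfrob (by rw [hc, one_pow]))
    have hden : s * (1 - s^q) ≠ 0 := mul_ne_zero hs0 (sub_ne_zero.mpr (Ne.symm hsq))
    have hnum : (1 : F) - s^(q+1) ≠ 0 := sub_ne_zero.mpr (Ne.symm hsq1)
    set A : F := (1 - s^(q+1)) / (s * (1 - s^q)) with hA
    have hA0 : A ≠ 0 := div_ne_zero hnum hden
    have hAe : A * (s * (1 - s^q)) = 1 - s^(q+1) := div_mul_cancel₀ _ hden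
    have hsq0 : s ^ q ≠ 0 := pow_ne_zero _ hs0
    have hA1 : A ≠ 1 := by
      intro hc
      rw [hc, one_mul] at hAe
      exact hs1 (by linear_combination hAe + pow_succ s q)
    rw [mem_PP]
    refine ⟨hA0, hA1, mul_ne_zero hs0 hA0, ?_, ?_, ?_, ?_⟩
    · -- s * A ≠ 1
      intro hc
      have h8 : s * A * (1 - s^q) = 1 - s^(q+1) := by rw [← hAe]; ring
      rw [hc, one_mul] at h8
      have h9 : s^q * s = s^q * 1 := by linear_combination h8 - pow_succ s q
      exact hs1 (mul_left_cancel₀ hsq0 h9)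
    · -- A ≠ s * A
      intro hc
      have h10 : (1 : F) * A = s * A := by rw [one_mul, ← hc]
      exact hs1 (mul_right_cancel₀ hA0 h10).symm
    · -- Phi equation
      have key : A * s - 1 = s^(q+1) * (A - 1) := by
        linear_combination hAe - A * pow_succ s q
      rw [mul_pow]
      linear_combination (A^(q+1)) * key
    · obtain ⟨t, ht0, hst⟩ := (pow_image_iff n' (q-1) hn'0 hq10 hn s).mpr hsn
      exact ⟨t, ht0, by rw [hst]; ring⟩
  · -- left inverse
    rintro ⟨a, b⟩ hab'
    rw [mem_PP] at hab'
    obtain ⟨ha0, ha1, hb0, hb1, hab, hΦ, t, ht0, hbt⟩ := hab'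
    simp only
    set s : F := b * a⁻¹ with hs
    have hs0 : s ≠ 0 := mul_ne_zero hb0 (inv_ne_zero ha0)
    have hba : b = a * s := by rw [hs]; field_simp
    have hs1 : s ≠ 1 := by
      intro hc; rw [hc, mul_one] at hba; exact hab hba.symm
    have hsq : s ^ q ≠ 1 := fun hc => hs1 (frob_inj hq hfrob (by rw [hc, one_pow]))
    have hden : s * (1 - s^q) ≠ 0 := mul_ne_zero hs0 (sub_ne_zero.mpr (Ne.symm hsq))
    have hΦ' : a^(q+1) * ((a*s) - 1) = a^(q+1) * (s^(q+1) * (a - 1)) := by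
      rw [← hba]
      calc a^(q+1) * (b-1) = b^(q+1) * (a-1) := hΦ
        _ = a^(q+1) * (s^(q+1) * (a-1)) := by rw [hba, mul_pow]; ring
    have key2 : a * s - 1 = s^(q+1) * (a - 1) :=
      mul_left_cancel₀ (pow_ne_zero (q+1) ha0) hΦ'
    have hAa : (1 - s^(q+1)) / (s * (1 - s^q)) = a := by
      rw [div_eq_iff hden]
      linear_combination (-1 : F) * key2 - a * pow_succ s q
    rw [Prod.mk.injEq]
    constructor
    · exact hAa
    · rw [hAa, hs]; field_simp
  · -- right inverse
    intro s hs
    rw [mem_SS] at hs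
    obtain ⟨hsn, hsq1⟩ := hs
    have hs0 : s ≠ 0 := by
      rintro rfl; rw [zero_pow (by omega : n' ≠ 0)] at hsn; exact zero_ne_one hsn
    have hs1 : s ≠ 1 := by rintro rfl; exact hsq1 (one_pow _)
    have hsq : s ^ q ≠ 1 := fun hc => hs1 (frob_inj hq hfrob (by rw [hc, one_pow]))
    have hden : s * (1 - s^q) ≠ 0 := mul_ne_zero hs0 (sub_ne_zero.mpr (Ne.symm hsq))
    have hnum : (1 : F) - s^(q+1) ≠ 0 := sub_ne_zero.mpr (Ne.symm hsq1)
    simp only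
    set A : F := (1 - s^(q+1)) / (s * (1 - s^q)) with hA
    have hA0 : A ≠ 0 := div_ne_zero hnum hden
    rw [mul_assoc, mul_inv_cancel₀ hA0, mul_one]

end BluherAux

/-- **Bluher's count** (Theorem 1 of the paper). Let `q = p^m` be a prime power and
`k ≥ 3`. In the finite field `F` with `q^k` elements, the number of `B ≠ 0` such that
`X^(q+1) - B·X + B` splits completely over `F` is `(q^(k-1)-1)/(q^2-1)` if `k` is odd and
`(q^(k-1)-q)/(q^2-1)` if `k` is even. -/
theorem bluher_count (p m q k : ℕ) (hp : p.Prime) (hm : 0 < m) (hq : q = p ^ m)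
    (hk : 3 ≤ k) (F : Type*) [Field F] [Fintype F] (hF : Fintype.card F = q ^ k) :
    {B : F | B ≠ 0 ∧
        ((X ^ (q + 1) - C B * X + C B : Polynomial F).map (RingHom.id F)).Splits}.ncard =
      if Odd k then (q ^ (k - 1) - 1) / (q ^ 2 - 1) else (q ^ (k - 1) - q) / (q ^ 2 - 1) := by
  classical
  have hq2 : 2 ≤ q := by
    rw [hq]
    calc 2 ≤ p := hp.two_le
      _ ≤ p ^ m := Nat.le_self_pow (by omega) p
  -- characteristic facts
  obtain ⟨c, hc⟩ := CharP.exists F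
  haveI : CharP F c := hc
  obtain ⟨n, hcp, hcn⟩ := FiniteField.card F c
  have hpc : p = c := by
    have h1 : p ∣ c ^ (n : ℕ) := by
      rw [← hcn, hF, hq, ← pow_mul]
      exact dvd_pow_self p (by positivity)
    exact (Nat.prime_dvd_prime_iff_eq hp hcp).mp (hp.dvd_of_dvd_pow h1)
  subst hpc
  haveI : Fact p.Prime := ⟨hp⟩
  have hq0 : (q : F) = 0 := by
    rw [hq, Nat.cast_pow, CharP.cast_eq_zero F p, zero_pow (by omega)]
  have hfrob : ∀ x y : F, (x - y) ^ q = x ^ q - y ^ q := by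
    intro x y
    rw [hq]
    exact sub_pow_char_pow x y m
  -- numerics
  have hqk1 : 1 < q ^ k := Nat.one_lt_pow (by omega) (by omega)
  obtain ⟨n', hn'⟩ : (q - 1) ∣ (q ^ k - 1) := by
    simpa using Nat.sub_dvd_pow_sub_pow q 1 k
  have hn'pos : 0 < n' := by
    rcases Nat.eq_zero_or_pos n' with h | h
    · rw [h, mul_zero] at hn'; omega
    · exact h
  have hcF : Fintype.card F - 1 = q ^ k - 1 := by rw [hF]
  have hnn : n' * (q - 1) = Fintype.card F - 1 := by rw [hcF, hn']; ring
  have hq1le : 1 ≤ q := by omega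
  have hqk1' : 1 ≤ q ^ k := by omega
  have hqkm1 : 1 ≤ q ^ (k-1) := Nat.one_le_pow _ _ (by omega)
  have hq2le : 1 ≤ q ^ 2 := Nat.one_le_pow _ _ (by omega)
  have hq2pos : 0 < q ^ 2 - 1 := by
    have h4 : 2 * 2 ≤ q * q := Nat.mul_le_mul hq2 hq2
    have : q ^ 2 = q * q := sq q
    omega
  have hz1 : ((q:ℤ))^k - 1 = ((q:ℤ) - 1) * (n' : ℤ) := by
    have h := hn'
    zify [hqk1', hq1le] at h
    exact h
  have hz3 : ((q:ℤ))^(k-1) * (q:ℤ) = (q:ℤ)^k := by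
    have h : q^(k-1) * q = q^k := by rw [← pow_succ]; congr 1; omega
    exact_mod_cast h
  have hqzero : ((q:ℤ)) ≠ 0 := by positivity
  have hq1z : ((q:ℤ) - 1) ≠ 0 := by
    have h : (2:ℤ) ≤ (q:ℤ) := by exact_mod_cast hq2
    omega
  -- reduce the set to splitSet
  have hsetEq : {B : F | B ≠ 0 ∧
      ((X ^ (q + 1) - C B * X + C B : Polynomial F).map (RingHom.id F)).Splits}
      = ↑(splitSet q : Finset F) := by
    ext B
    simp only [Set.mem_setOf_eq, Finset.mem_coe, mem_splitSet]
    constructor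
    · rintro ⟨h1, h2⟩; exact ⟨h1, (splits_iff_bRoots hq2 hq0 h1).mp h2⟩
    · rintro ⟨h1, h2⟩; exact ⟨h1, (splits_iff_bRoots hq2 hq0 h1).mpr h2⟩
  rw [hsetEq, Set.ncard_coe_finset]
  -- master identity
  have hmaster : (splitSet q : Finset F).card * ((q+1) * q) = (SS q n' : Finset F).card := by
    rw [← PP_card hq2 hfrob (e := n') hn'pos (by rw [hcF]; exact hn'.symm),
      PP_card_eq_SS hq2 hfrob hn'pos hnn]
  set N := (splitSet q : Finset F).card with hN
  -- split SS
  have hA : ({s ∈ (univ : Finset F) | s ^ n' = 1}).card = n' :=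
    count_nth_roots n' (q-1) hn'pos (by omega) hnn
  set D := ({s ∈ (univ : Finset F) | s ^ n' = 1}).filter (fun s => s^(q+1) = 1) with hD
  have hsplit := Finset.card_filter_add_card_filter_not
      (s := {s ∈ (univ : Finset F) | s ^ n' = 1}) (p := fun s : F => s ^ (q+1) = 1)
  have hSSeq : ({s ∈ (univ : Finset F) | s ^ n' = 1}).filter (fun s => ¬ s^(q+1) = 1)
      = SS q n' := by
    ext s; simp [SS]
  rw [← hD, hA, hSSeq] at hsplit
  have hSScard : (SS q n' : Finset F).card = n' - D.card := by omega
  by_cases hodd : Odd k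
  · -- odd case
    obtain ⟨j, hj⟩ := hodd
    obtain ⟨L, hL⟩ : (q^2 - 1) ∣ (q^(k-1) - 1) := by
      have h := Nat.sub_dvd_pow_sub_pow (q^2) 1 j
      rw [← pow_mul] at h
      have h2 : 2*j = k-1 := by omega
      simpa [h2] using h
    have hz2 : ((q:ℤ))^(k-1) - 1 = ((q:ℤ)^2 - 1) * (L : ℤ) := by
      zify [hqkm1, hq2le] at hL
      exact hL
    have hn'eq : n' = 1 + (q+1) * (q * L) := by
      have hzz : ((q:ℤ) - 1) * ((n' : ℤ) - (1 + ((q:ℤ)+1)*((q:ℤ)*(L:ℤ)))) = 0 := by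
        linear_combination (-1 : ℤ) * hz1 + (q:ℤ) * hz2 - hz3
      have h5 := (mul_eq_zero.mp hzz).resolve_left hq1z
      exact_mod_cast sub_eq_zero.mp h5
    have hcop : Nat.Coprime (q+1) n' := by
      rw [hn'eq]
      simpa [add_comm] using (Nat.coprime_one_right (q+1)).add_mul_left_right (q*L)
    have hDeq : D = {(1 : F)} := by
      rw [hD]; ext s
      simp only [mem_filter, mem_univ, true_and, mem_singleton]
      constructor
      · rintro ⟨hs1, hs2⟩
        have h1 : orderOf s ∣ n' := orderOf_dvd_of_pow_eq_one hs1
        have h2 : orderOf s ∣ q+1 := orderOf_dvd_of_pow_eq_one hs2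
        have h3 : orderOf s ∣ 1 := hcop ▸ Nat.dvd_gcd h2 h1
        exact orderOf_eq_one_iff.mp (Nat.dvd_one.mp h3)
      · rintro rfl; exact ⟨one_pow _, one_pow _⟩
    have hNmul : N * ((q+1)*q) = n' - 1 := by
      rw [hmaster, hSScard, hDeq]; simp
    have hzN : (N:ℤ) * (((q:ℤ)+1)*(q:ℤ)) = (n':ℤ) - 1 := by
      zify [hn'pos] at hNmul
      exact_mod_cast hNmul
    have hkey : (N:ℤ) * ((q:ℤ)^2 - 1) = (q:ℤ)^(k-1) - 1 := by
      have h9 : (q:ℤ) * ((N:ℤ)*((q:ℤ)^2 - 1) - ((q:ℤ)^(k-1) - 1)) = 0 := by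
        linear_combination ((q:ℤ) - 1) * hzN - hz1 - hz3
      have h10 := (mul_eq_zero.mp h9).resolve_left hqzero
      exact sub_eq_zero.mp h10
    have hkeyN : N * (q^2 - 1) = q^(k-1) - 1 := by
      zify [hq2le, hqkm1]
      exact hkey
    rw [if_pos ⟨j, hj⟩, ← hkeyN, Nat.mul_div_cancel _ hq2pos]
  · -- even case
    have heven : Even k := Nat.not_odd_iff_even.mp hodd
    obtain ⟨j, hj⟩ := heven
    obtain ⟨L, hL⟩ : (q^2 - 1) ∣ (q^k - 1) := by
      have h := Nat.sub_dvd_pow_sub_pow (q^2) 1 j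
      rw [← pow_mul] at h
      have h2 : 2*j = k := by omega
      simpa [h2] using h
    have hzL : ((q:ℤ))^k - 1 = ((q:ℤ)^2 - 1) * (L : ℤ) := by
      zify [hqk1', hq2le] at hL
      exact hL
    have hn'L : n' = (q+1) * L := by
      have hzz : ((q:ℤ) - 1) * ((n' : ℤ) - ((q:ℤ)+1)*(L:ℤ)) = 0 := by
        linear_combination (-1 : ℤ) * hz1 + hzL
      have h5 := (mul_eq_zero.mp hzz).resolve_left hq1z
      exact_mod_cast sub_eq_zero.mp h5
    have hLpos : 0 < L := by
      rcases Nat.eq_zero_or_pos L with h | h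
      · rw [h, mul_zero] at hn'L; omega
      · exact h
    have hqq : (q+1)*(q-1) = q^2 - 1 := by
      zify [hq1le, hq2le]
      ring
    have hDeq : D = {s ∈ (univ : Finset F) | s^(q+1) = 1} := by
      rw [hD]; ext s
      simp only [mem_filter, mem_univ, true_and]
      constructor
      · rintro ⟨_, hs2⟩; exact hs2
      · intro hs2
        refine ⟨?_, hs2⟩
        rw [hn'L, pow_mul, hs2, one_pow]
    have hDcard : D.card = q + 1 := by
      rw [hDeq]
      refine count_nth_roots (q+1) ((q-1)*L) (by omega) ?_ ?_
      · exact Nat.mul_pos (by omega) hLpos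
      · rw [hcF, ← mul_assoc, hqq, ← hL]
    have hq1len' : q + 1 ≤ n' := by
      rw [hn'L]
      exact Nat.le_mul_of_pos_right _ hLpos
    have hNmul : N * ((q+1)*q) = n' - (q+1) := by
      rw [hmaster, hSScard, hDcard]
    have hzN : (N:ℤ) * (((q:ℤ)+1)*(q:ℤ)) = (n':ℤ) - ((q:ℤ)+1) := by
      zify [hq1len'] at hNmul
      exact_mod_cast hNmul
    have hqlekm : q ≤ q^(k-1) := Nat.le_self_pow (by omega) q
    have hkey : (N:ℤ) * ((q:ℤ)^2 - 1) = (q:ℤ)^(k-1) - (q:ℤ) := by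
      have h9 : (q:ℤ) * ((N:ℤ)*((q:ℤ)^2 - 1) - ((q:ℤ)^(k-1) - (q:ℤ))) = 0 := by
        linear_combination ((q:ℤ) - 1) * hzN - hz1 - hz3
      have h10 := (mul_eq_zero.mp h9).resolve_left hqzero
      exact sub_eq_zero.mp h10
    have hkeyN : N * (q^2 - 1) = q^(k-1) - q := by
      zify [hq2le, hqlekm]
      exact hkey
    rw [if_neg hodd, ← hkeyN, Nat.mul_div_cancel _ hq2pos]
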